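/- Fix $m>0$ and an integer $n \ge 2$. Let $X:[m/2,\infty)\to\mathbb{R}$ be $C^1$ and bounded, and let $Y:[m/2,\infty)\to\mathbb{R}$ be continuous. If both the improper integral $I_n = \int_{m/2}^{\infty}\big[(r X' - \beta_n Y)^2 + 2(N-1)\alpha X Y\big]\frac{dr}{\alpha\, r^2\, \psi_0}$ and the improper integral $\int_{m/2}^{\infty} \frac{\beta_n^2}{\alpha\, r^2\, \psi_0}\big(Y - \frac{r}{\beta_n} X' + \frac{(N-1)\alpha}{\beta_n^2} X\big)^2 dr$ converge, then $I_n \ge -\frac{N-1}{m(2N+1)}\, X(m/2)^2$. -/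

import Mathlib

/-- `ψ₀(r) = 1 + m/(2r)`. -/
noncomputable def psi0 (m r : ℝ) : ℝ := 1 + m / (2 * r)

/-- `α(r) = 1 - m/(2r)`. -/
noncomputable def alphaF (m r : ℝ) : ℝ := 1 - m / (2 * r)

/-- `N = n(n+1)/2`. -/
noncomputable def Nn (n : ℕ) : ℝ := (n : ℝ) * ((n : ℝ) + 1) / 2

/-- `β_n(r) = (N-1) ψ₀(r) + 3m/(r ψ₀(r))`. -/
noncomputable def betaF (m : ℝ) (n : ℕ) (r : ℝ) : ℝ :=
  (Nn n - 1) * psi0 m r + 3 * m / (r * psi0 m r)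

/-- The improper integral `∫_a^∞ f` converges and equals `L`. -/
def ImproperEq (f : ℝ → ℝ) (a L : ℝ) : Prop :=
  (∀ b : ℝ, IntervalIntegrable f MeasureTheory.volume a b) ∧
    Filter.Tendsto (fun b : ℝ => ∫ r in a..b, f r) Filter.atTop (nhds L)

lemma key_alg (K r ψ α β X X' Y : ℝ) (hr : r ≠ 0) (hψ : ψ ≠ 0) (hα : α ≠ 0) (hβ : β ≠ 0) :
    ((r * X' - β * Y) ^ 2 + 2 * K * α * X * Y) / (α * r ^ 2 * ψ)
      - β ^ 2 / (α * r ^ 2 * ψ) * (Y - r / β * X' + K * α / β ^ 2 * X) ^ 2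
    = (K * (2 * X * X') * (r * ψ * β) - K * X ^ 2 * (K * α * ψ)) / (r * ψ * β) ^ 2 := by
  field_simp
  ring


/-- Estimate (40c): `I_n ≥ -(N-1)/(m(2N+1)) X(m/2)²`. -/
theorem In_lower_bound (m : ℝ) (hm : 0 < m) (n : ℕ) (hn : 2 ≤ n)
    (X Y : ℝ → ℝ) (hX : ContDiffOn ℝ 1 X (Set.Ici (m / 2)))
    (hXbdd : ∃ C : ℝ, ∀ r : ℝ, m / 2 ≤ r → |X r| ≤ C)
    (hY : ContinuousOn Y (Set.Ici (m / 2)))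
    (In : ℝ)
    (hIn : ImproperEq
      (fun r : ℝ => ((r * deriv X r - betaF m n r * Y r) ^ 2
          + 2 * (Nn n - 1) * alphaF m r * X r * Y r)
        / (alphaF m r * r ^ 2 * psi0 m r))
      (m / 2) In)
    (hSq : ∃ L : ℝ, ImproperEq
      (fun r : ℝ => (betaF m n r) ^ 2 / (alphaF m r * r ^ 2 * psi0 m r) *
        (Y r - r / betaF m n r * deriv X r
          + (Nn n - 1) * alphaF m r / (betaF m n r) ^ 2 * X r) ^ 2)
      (m / 2) L) :
    In ≥ -((Nn n - 1) / (m * (2 * Nn n + 1))) * X (m / 2) ^ 2 := by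
  obtain ⟨C, hC⟩ := hXbdd
  obtain ⟨L, hL⟩ := hSq
  have hn2 : (2:ℝ) ≤ (n:ℝ) := by exact_mod_cast hn
  have hN3 : (3:ℝ) ≤ Nn n := by unfold Nn; nlinarith
  have hc0 : 0 < m / 2 := by linarith
  set K := Nn n - 1 with hK
  have hK0 : (0:ℝ) < K := by rw [hK]; linarith
  set F : ℝ → ℝ := fun r : ℝ => ((r * deriv X r - betaF m n r * Y r) ^ 2
          + 2 * K * alphaF m r * X r * Y r)
        / (alphaF m r * r ^ 2 * psi0 m r) with hFdef
  set G : ℝ → ℝ := fun r : ℝ => (betaF m n r) ^ 2 / (alphaF m r * r ^ 2 * psi0 m r) *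
        (Y r - r / betaF m n r * deriv X r
          + K * alphaF m r / (betaF m n r) ^ 2 * X r) ^ 2 with hGdef

  -- D r = r * psi0 * betaF, the denominator of W
  set D : ℝ → ℝ := fun r : ℝ => K * (r + m + m ^ 2 / (4 * r)) + 3 * m with hDdef
  have hDpos : ∀ r : ℝ, 0 < r → 0 < D r := by
    intro r hr
    have h1 : 0 < r + m + m ^ 2 / (4 * r) := by positivity
    have := mul_pos hK0 h1
    simp only [hDdef]
    nlinarith
  set W : ℝ → ℝ := fun r : ℝ => K * X r ^ 2 / D r with hWdef
  -- derivative of X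
  have hXd : ∀ r : ℝ, m / 2 < r → HasDerivAt X (deriv X r) r := by
    intro r hr
    have h1 : Set.Ici (m / 2) ∈ nhds r := Ici_mem_nhds hr
    exact ((hX.differentiableOn one_ne_zero).differentiableAt h1).hasDerivAt
  -- derivative of D
  have hDd : ∀ r : ℝ, r ≠ 0 → HasDerivAt D (K * (1 - m ^ 2 / (4 * r ^ 2))) r := by
    intro r hr
    have hinv : HasDerivAt (fun x : ℝ => m ^ 2 / 4 * x⁻¹) (m ^ 2 / 4 * (-(r ^ 2)⁻¹)) r :=
      (hasDerivAt_inv hr).const_mul (m ^ 2 / 4)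
    have hid : HasDerivAt (fun x : ℝ => x + m) 1 r := (hasDerivAt_id r).add_const m
    have h2 := ((hid.fun_add hinv).const_mul K).add_const (3 * m)
    have heq : (fun x : ℝ => K * (x + m + m ^ 2 / 4 * x⁻¹) + 3 * m)
        = fun x : ℝ => K * (x + m + m ^ 2 / (4 * x)) + 3 * m := by
      funext x; ring
    rw [heq] at h2
    refine h2.congr_deriv ?_
    rw [mul_comm (m ^ 2 / 4) (-(r ^ 2)⁻¹)]
    rw [div_eq_mul_inv (m ^ 2) (4 * r ^ 2), mul_inv]
    ring
  -- derivative of W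
  have hWd : ∀ r : ℝ, m / 2 < r → HasDerivAt W
      ((K * (2 * X r * deriv X r) * D r - K * X r ^ 2 * (K * (1 - m ^ 2 / (4 * r ^ 2))))
        / D r ^ 2) r := by
    intro r hr
    have hr0 : 0 < r := lt_trans hc0 hr
    have hX2 : HasDerivAt (fun x : ℝ => K * X x ^ 2) (K * (2 * X r * deriv X r)) r := by
      have h := ((hXd r hr).pow 2).const_mul K
      refine h.congr_deriv ?_
      push_cast
      ring
    exact hX2.div (hDd r hr0.ne') (hDpos r hr0).ne'
  -- basic positivity on (m/2, ∞)
  have hfacts : ∀ r : ℝ, m / 2 < r → 0 < psi0 m r ∧ 0 < alphaF m r ∧ 0 < betaF m n r := by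
    intro r hr
    have hr0 : 0 < r := lt_trans hc0 hr
    have hψ : 0 < psi0 m r := by unfold psi0; positivity
    have hα : 0 < alphaF m r := by
      unfold alphaF
      have h1 : m / (2 * r) < 1 := (div_lt_one (by positivity)).mpr (by linarith)
      linarith
    refine ⟨hψ, hα, ?_⟩
    unfold betaF
    rw [← hK]
    exact add_pos (mul_pos hK0 hψ) (div_pos (by positivity) (mul_pos hr0 hψ))
  -- the pointwise identity F - G = W'
  have hiden : ∀ r : ℝ, m / 2 < r → F r - G r
      = (K * (2 * X r * deriv X r) * D r - K * X r ^ 2 * (K * (1 - m ^ 2 / (4 * r ^ 2))))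
        / D r ^ 2 := by
    intro r hr
    obtain ⟨hψ, hα, hβ⟩ := hfacts r hr
    have hr0 : 0 < r := lt_trans hc0 hr
    have e1 : D r = r * psi0 m r * betaF m n r := by
      simp only [hDdef]
      unfold betaF psi0
      rw [← hK]
      field_simp
      ring
    have e2 : K * (1 - m ^ 2 / (4 * r ^ 2)) = K * alphaF m r * psi0 m r := by
      unfold alphaF psi0
      field_simp
      ring
    rw [hFdef, hGdef]
    simp only
    rw [e1, e2]
    exact key_alg K r (psi0 m r) (alphaF m r) (betaF m n r) (X r) (deriv X r) (Y r)
      hr0.ne' hψ.ne' hα.ne' hβ.ne'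
  -- continuity of W on [m/2, ∞)
  have hDcont : ContinuousOn D (Set.Ici (m / 2)) := by
    rw [hDdef]
    refine ContinuousOn.add (continuousOn_const.mul (ContinuousOn.add
      (ContinuousOn.add continuousOn_id continuousOn_const)
      (continuousOn_const.div (continuousOn_const.mul continuousOn_id) ?_))) continuousOn_const
    intro r hr
    have hr0 : 0 < r := lt_of_lt_of_le hc0 hr
    exact ne_of_gt (by simpa using by linarith : (0:ℝ) < 4 * id r)
  have hWcont : ContinuousOn W (Set.Ici (m / 2)) := by
    rw [hWdef]
    refine ContinuousOn.div (continuousOn_const.mul ((hX.continuousOn).pow 2)) hDcont ?_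
    intro r hr
    exact (hDpos r (lt_of_lt_of_le hc0 hr)).ne'
  -- FTC: for b ≥ m/2, ∫F - ∫G = W b - W (m/2)
  have key : ∀ b : ℝ, m / 2 ≤ b →
      (∫ r in (m / 2)..b, F r) - (∫ r in (m / 2)..b, G r) = W b - W (m / 2) := by
    intro b hb
    have hFi := hIn.1 b
    have hGi := hL.1 b
    have hint : IntervalIntegrable (fun r => F r - G r) MeasureTheory.volume (m / 2) b :=
      hFi.sub hGi
    have hder : ∀ r ∈ Set.Ioo (m / 2) b, HasDerivWithinAt W (F r - G r) (Set.Ioi r) r := by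
      intro r hr
      have h := (hWd r hr.1).hasDerivWithinAt (s := Set.Ioi r)
      rwa [← hiden r hr.1] at h
    have h := intervalIntegral.integral_eq_sub_of_hasDeriv_right_of_le hb
      (hWcont.mono (Set.Icc_subset_Ici_self)) hder hint
    rw [intervalIntegral.integral_sub hFi hGi] at h
    exact h
  -- W tends to 0 at infinity
  have hWtend : Filter.Tendsto W Filter.atTop (nhds 0) := by
    apply squeeze_zero_norm' (a := fun b : ℝ => C ^ 2 / b)
    · filter_upwards [Filter.eventually_ge_atTop (m / 2),
        Filter.eventually_gt_atTop (0 : ℝ)] with b hb hb0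
      have hD0 : 0 < D b := hDpos b hb0
      have hXb : X b ^ 2 ≤ C ^ 2 := by
        rw [← sq_abs]
        exact pow_le_pow_left₀ (abs_nonneg _) (hC b hb) 2
      have hC0 : 0 ≤ C := le_trans (abs_nonneg _) (hC b hb)
      have hWnn : 0 ≤ W b := by
        rw [hWdef]
        positivity
      have hDb : K * b ≤ D b := by
        simp only [hDdef]
        have h1 : 0 < m ^ 2 / (4 * b) := by positivity
        nlinarith
      have hle : W b ≤ C ^ 2 / b := by
        rw [hWdef]
        simp only
        calc K * X b ^ 2 / D b ≤ K * C ^ 2 / (K * b) := by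
              apply div_le_div₀ (by positivity) (by nlinarith) (by positivity) hDb
          _ = C ^ 2 / b := mul_div_mul_left _ _ hK0.ne'
      rw [Real.norm_eq_abs, abs_of_nonneg hWnn]
      exact hle
    · exact tendsto_const_nhds.div_atTop Filter.tendsto_id
  -- combine limits
  have h1 : Filter.Tendsto
      (fun b : ℝ => (∫ r in (m / 2)..b, F r) - (∫ r in (m / 2)..b, G r))
      Filter.atTop (nhds (In - L)) := hIn.2.sub hL.2
  have h2 : Filter.Tendsto (fun b : ℝ => W b - W (m / 2)) Filter.atTop
      (nhds (0 - W (m / 2))) := hWtend.sub_const _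
  have heq : In - L = 0 - W (m / 2) := by
    refine tendsto_nhds_unique (h1.congr' ?_) h2
    filter_upwards [Filter.eventually_ge_atTop (m / 2)] with b hb using key b hb
  -- L ≥ 0
  have hLnn : 0 ≤ L := by
    refine ge_of_tendsto hL.2 ?_
    filter_upwards [Filter.eventually_ge_atTop (m / 2)] with b hb
    refine intervalIntegral.integral_nonneg hb ?_
    intro r hr
    have hr0 : 0 < r := lt_of_lt_of_le hc0 hr.1
    have hψ : 0 ≤ psi0 m r := by unfold psi0; positivity
    have hα : 0 ≤ alphaF m r := by
      unfold alphaF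
      have h3 : m / (2 * r) ≤ 1 := (div_le_one (by positivity)).mpr (by linarith [hr.1])
      linarith
    exact mul_nonneg (div_nonneg (sq_nonneg _) (by positivity)) (sq_nonneg _)
  -- value of W(m/2)
  have hWc : W (m / 2) = K / (m * (2 * Nn n + 1)) * X (m / 2) ^ 2 := by
    have hNn : Nn n = K + 1 := by rw [hK]; ring
    rw [hWdef, hDdef]
    simp only [hNn]
    have hmn : m ≠ 0 := hm.ne'
    have h4 : (2 * (K + 1) + 1) ≠ 0 := by nlinarith
    field_simp
    ring
  rw [ge_iff_le, neg_mul, ← hWc]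
  linarith [heq, hLnn]
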